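/- Uniqueness of AP asymmetric factorization: if φ ∈ GAP admits two AP asymmetric factorizations φ = φ₋^{(1)} e_{λ₁} φ_e^{(1)} = φ₋^{(2)} e_{λ₂} φ_e^{(2)}, then λ₁ = λ₂ and there exists γ ∈ ℂ∖{0} with φ₋^{(1)} = γ φ₋^{(2)} and φ_e^{(1)} = γ^{-1} φ_e^{(2)}. -/

import Mathlib

open Filter Set

/-- `p` is a trigonometric polynomial with frequencies in `S`:
`p x = ∑ n, c n * exp (i * λ n * x)` with all `λ n ∈ S`. -/
def IsTrigPoly (S : Set ℝ) (p : ℝ → ℂ) : Prop :=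
  ∃ (N : ℕ) (c : Fin N → ℂ) (lam : Fin N → ℝ), (∀ n, lam n ∈ S) ∧
    ∀ x : ℝ, p x = ∑ n : Fin N, c n * Complex.exp (Complex.I * (lam n) * x)

/-- The uniform closure of the trigonometric polynomials with frequencies in `S`.
For `S = univ` this is the algebra `AP` of almost periodic functions, i.e. the smallest
closed subalgebra of `L^∞(ℝ)` containing all the exponentials `e_λ`, `λ ∈ ℝ`. -/
def APin (S : Set ℝ) : Set (ℝ → ℂ) :=
  {φ | ∃ p : ℕ → ℝ → ℂ, (∀ n, IsTrigPoly S (p n)) ∧ TendstoUniformly p φ atTop}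

/-- The algebra `AP` of almost periodic functions. -/
def AP : Set (ℝ → ℂ) := APin Set.univ

/-- `AP⁻`: the closed subalgebra generated by the exponentials `e_λ` with `λ ≤ 0`. -/
def APminus : Set (ℝ → ℂ) := APin (Set.Iic 0)

/-- `AP⁺`: the closed subalgebra generated by the exponentials `e_λ` with `λ ≥ 0`. -/
def APplus : Set (ℝ → ℂ) := APin (Set.Ici 0)

/-- `GAP`: the group of invertible elements of the algebra `AP`. -/
def GAP : Set (ℝ → ℂ) := {φ | φ ∈ AP ∧ ∃ ψ ∈ AP, ∀ x, φ x * ψ x = 1}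

/-- `GAP⁻`: the group of invertible elements of the algebra `AP⁻`. -/
def GAPminus : Set (ℝ → ℂ) := {φ | φ ∈ APminus ∧ ∃ ψ ∈ APminus, ∀ x, φ x * ψ x = 1}

/-- `GAP⁺`: the group of invertible elements of the algebra `AP⁺`. -/
def GAPplus : Set (ℝ → ℂ) := {φ | φ ∈ APplus ∧ ∃ ψ ∈ APplus, ∀ x, φ x * ψ x = 1}

/-- Boundedness of a function `ℝ → ℂ`. -/
def IsBdd (φ : ℝ → ℂ) : Prop := ∃ C : ℝ, ∀ x, ‖φ x‖ ≤ C

/-- `GL^∞(ℝ)`: bounded functions which are invertible with bounded inverse. -/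
def GLinf : Set (ℝ → ℂ) := {φ | IsBdd φ ∧ ∃ ψ, IsBdd ψ ∧ ∀ x, φ x * ψ x = 1}

/-- `φ = φ₋ e_λ φ_e` is an AP asymmetric factorization of `φ`:
`φ₋ ∈ GAP⁻`, `φ_e ∈ GL^∞(ℝ)` even. -/
def IsAPAsymFactorization (φ φm : ℝ → ℂ) (l : ℝ) (φe : ℝ → ℂ) : Prop :=
  φm ∈ GAPminus ∧ φe ∈ GLinf ∧ (∀ x, φe (-x) = φe x) ∧
    ∀ x : ℝ, φ x = φm x * Complex.exp (Complex.I * l * x) * φe x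

/-- `Φ = ψ₋ e_{2λ} (ψ̃₋)⁻¹` is an AP antisymmetric factorization of `Φ`: `ψ₋ ∈ GAP⁻`. -/
def IsAPAntisymFactorization (Φ ψm : ℝ → ℂ) (l : ℝ) : Prop :=
  ψm ∈ GAPminus ∧
    ∀ x : ℝ, Φ x = ψm x * Complex.exp (Complex.I * (2 * l) * x) * (ψm (-x))⁻¹


/-! ### Auxiliary material for the proof -/

noncomputable section APFactorizationAux

open Complex

/-- Extension of a trig polynomial to the complex plane. -/
def TrigExt (N : ℕ) (c : Fin N → ℂ) (lam : Fin N → ℝ) : ℂ → ℂ :=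
  fun z => ∑ n : Fin N, c n * Complex.exp (Complex.I * (lam n) * z)

lemma trigExt_differentiable (N : ℕ) (c : Fin N → ℂ) (lam : Fin N → ℝ) :
    Differentiable ℂ (TrigExt N c lam) := by
  apply Differentiable.fun_sum
  intro n _
  exact (differentiable_const _).mul ((differentiable_const _).mul differentiable_id).cexp

lemma trigExt_bound (N : ℕ) (c : Fin N → ℂ) (lam : Fin N → ℝ)
    (hlam : ∀ n, 0 ≤ lam n) {z : ℂ} (hz : 0 ≤ z.im) :
    ‖TrigExt N c lam z‖ ≤ ∑ n : Fin N, ‖c n‖ := by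
  refine (norm_sum_le _ _).trans (Finset.sum_le_sum fun n _ => ?_)
  rw [norm_mul]
  have h1 : ‖Complex.exp (Complex.I * (lam n) * z)‖ ≤ 1 := by
    rw [Complex.norm_exp]
    have : (Complex.I * (lam n) * z).re = -(lam n * z.im) := by
      simp [Complex.mul_re, Complex.mul_im]
    rw [this]
    exact Real.exp_le_one_iff.2 (neg_nonpos.2 (mul_nonneg (hlam n) hz))
  calc ‖c n‖ * ‖Complex.exp (Complex.I * (lam n) * z)‖ ≤ ‖c n‖ * 1 :=
        mul_le_mul_of_nonneg_left h1 (norm_nonneg _)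
    _ = ‖c n‖ := mul_one _

lemma trigExt_bound_real (N : ℕ) (c : Fin N → ℂ) (lam : Fin N → ℝ) (x : ℝ) :
    ‖TrigExt N c lam x‖ ≤ ∑ n : Fin N, ‖c n‖ := by
  refine (norm_sum_le _ _).trans (Finset.sum_le_sum fun n _ => ?_)
  rw [norm_mul]
  have h1 : ‖Complex.exp (Complex.I * (lam n) * x)‖ = 1 := by
    rw [Complex.norm_exp]
    have : (Complex.I * (lam n) * (x:ℂ)).re = 0 := by
      simp [Complex.mul_re, Complex.mul_im]
    rw [this, Real.exp_zero]
  rw [h1, mul_one]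


lemma norm_exp_smul_aux (ε : ℝ) (w : ℂ) :
    ‖Complex.exp ((ε:ℂ) * Complex.I * w)‖ = Real.exp (-(ε * w.im)) := by
  rw [Complex.norm_exp]
  congr 1
  simp [Complex.mul_re, Complex.mul_im]

/-- Maximum principle on the closed upper half-plane for bounded functions. -/
lemma maxPrincipleUHP {f : ℂ → ℂ} {K M : ℝ}
    (hc : ContinuousOn f {z : ℂ | 0 ≤ z.im})
    (hd : DifferentiableOn ℂ f {z : ℂ | 0 < z.im})
    (hK : ∀ z : ℂ, 0 ≤ z.im → ‖f z‖ ≤ K)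
    (hM : ∀ x : ℝ, ‖f (x : ℂ)‖ ≤ M)
    {z : ℂ} (hz : 0 ≤ z.im) : ‖f z‖ ≤ M := by
  have hM0 : 0 ≤ M := (norm_nonneg _).trans (hM 0)
  refine le_of_forall_pos_le_add fun δ hδ => ?_
  -- suffices to bound `‖f z‖ * exp (-(ε * z.im))` for all `ε > 0`
  have key : ∀ ε : ℝ, 0 < ε → ‖f z‖ * Real.exp (-(ε * z.im)) ≤ M + δ := by
    intro ε hε
    -- choose R
    have htend : Tendsto (fun R : ℝ => K * Real.exp (-(ε * R))) atTop (nhds 0) := by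
      have h1 : Tendsto (fun R : ℝ => ε * R) atTop atTop :=
        Tendsto.const_mul_atTop hε tendsto_id
      have h2 : Tendsto (fun R : ℝ => Real.exp (-(ε * R))) atTop (nhds 0) :=
        Real.tendsto_exp_neg_atTop_nhds_zero.comp h1
      simpa using h2.const_mul K
    obtain ⟨R, hR⟩ : ∃ R : ℝ, z.im < R ∧ K * Real.exp (-(ε * R)) ≤ δ := by
      have h3 : ∀ᶠ R : ℝ in atTop, K * Real.exp (-(ε * R)) < δ :=
        htend.eventually_lt_const hδ
      exact ((eventually_gt_atTop z.im).and (h3.mono fun R h => h.le)).exists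
    obtain ⟨hR1, hR2⟩ := hR
    have hR0 : 0 < R := lt_of_le_of_lt hz hR1
    -- apply PL to g = f * exp(ε I z)
    set g : ℂ → ℂ := fun w => f w * Complex.exp ((ε:ℂ) * Complex.I * w) with hg
    have hgnorm : ∀ w : ℂ, ‖g w‖ = ‖f w‖ * Real.exp (-(ε * w.im)) := by
      intro w; rw [hg]; simp only [norm_mul, norm_exp_smul_aux]
    have hmain : ‖g z‖ ≤ M + δ := by
      refine PhragmenLindelof.horizontal_strip (a := 0) (b := R) (C := M + δ) (f := g)
          ?_ ?_ ?_ ?_ hz hR1.le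
      · constructor
        · refine DifferentiableOn.mul (hd.mono ?_) ?_
          · intro w hw
            simp only [mem_preimage, mem_Ioo] at hw
            exact hw.1
          · exact (((differentiable_const _).mul differentiable_id).cexp).differentiableOn
        · refine ContinuousOn.mono (s := Complex.im ⁻¹' Icc 0 R) ?_ ?_
          · refine ContinuousOn.mul (hc.mono ?_) (Continuous.continuousOn (by continuity))
            intro w hw
            simp only [mem_preimage, mem_Icc] at hw
            exact hw.1
          · exact closure_minimal (preimage_mono Ioo_subset_Icc_self)
              (IsClosed.preimage Complex.continuous_im isClosed_Icc)
      · refine ⟨Real.pi / (2 * (R - 0)), ?_, 0, ?_⟩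
        · rw [sub_zero]
          have : Real.pi / (2 * R) < Real.pi / R := by
            apply div_lt_div_of_pos_left Real.pi_pos hR0
            linarith
          simpa using this
        · rw [Asymptotics.isBigO_iff]
          refine ⟨K, ?_⟩
          filter_upwards [mem_inf_of_right (mem_principal_self _)] with w hw
          simp only [mem_preimage, mem_Ioo] at hw
          rw [hgnorm]
          have h5 : ‖f w‖ * Real.exp (-(ε * w.im)) ≤ K * 1 := by
            apply mul_le_mul (hK w hw.1.le) ?_ (Real.exp_nonneg _)
              ((norm_nonneg _).trans (hK w hw.1.le))
            exact Real.exp_le_one_iff.2 (neg_nonpos.2 (mul_nonneg hε.le hw.1.le))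
          refine h5.trans ?_
          simp [Real.exp_zero, Real.norm_eq_abs, _root_.abs_of_nonneg (Real.exp_nonneg _)]
      · intro w hw
        have hwr : w = ((w.re : ℝ) : ℂ) := Complex.ext rfl (by simp [hw])
        rw [hgnorm, hw, mul_zero, neg_zero, Real.exp_zero, mul_one]
        calc ‖f w‖ = ‖f ((w.re : ℝ) : ℂ)‖ := by rw [← hwr]
          _ ≤ M := hM w.re
          _ ≤ M + δ := by linarith
      · intro w hw
        rw [hgnorm, hw]
        calc ‖f w‖ * Real.exp (-(ε * R)) ≤ K * Real.exp (-(ε * R)) :=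
              mul_le_mul_of_nonneg_right (hK w (by rw [hw]; exact hR0.le) : ‖f w‖ ≤ K)
                (Real.exp_nonneg _)
          _ ≤ δ := hR2
          _ ≤ M + δ := by linarith
    calc ‖f z‖ * Real.exp (-(ε * z.im)) = ‖g z‖ := (hgnorm z).symm
      _ ≤ M + δ := hmain
  -- let ε → 0
  have hlim : Tendsto (fun ε : ℝ => ‖f z‖ * Real.exp (-(ε * z.im))) (nhdsWithin 0 (Ioi 0))
      (nhds (‖f z‖)) := by
    have : Tendsto (fun ε : ℝ => ‖f z‖ * Real.exp (-(ε * z.im))) (nhds 0)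
        (nhds (‖f z‖ * Real.exp (-(0 * z.im)))) := by
      apply Tendsto.const_mul
      exact (Real.continuous_exp.comp (continuous_neg.comp (continuous_mul_right _))).tendsto 0
    simpa using this.mono_left nhdsWithin_le_nhds
  exact le_of_tendsto hlim (eventually_nhdsWithin_of_forall fun ε hε => key ε hε)


lemma isOpen_UHP : IsOpen {z : ℂ | 0 < z.im} := isOpen_Ioi.preimage Complex.continuous_im

/-- Every element of `APin (Ici 0)` extends to a bounded holomorphic function on the
closed upper half-plane. -/
lemma exists_uhp_extension {v : ℝ → ℂ} (hv : v ∈ APin (Set.Ici 0)) :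
    ∃ G : ℂ → ℂ, ContinuousOn G {z : ℂ | 0 ≤ z.im} ∧
      DifferentiableOn ℂ G {z : ℂ | 0 < z.im} ∧ (∀ x : ℝ, G (x : ℂ) = v x) ∧
      ∃ C : ℝ, ∀ z : ℂ, 0 ≤ z.im → ‖G z‖ ≤ C := by
  obtain ⟨p, hp, hconv⟩ := hv
  have hch : ∀ n, ∃ P : ℂ → ℂ, Differentiable ℂ P ∧ (∀ x : ℝ, P (x : ℂ) = p n x) ∧
      ∃ B : ℝ, ∀ z : ℂ, 0 ≤ z.im → ‖P z‖ ≤ B := by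
    intro n
    obtain ⟨N, c, lam, hlam, hform⟩ := hp n
    refine ⟨TrigExt N c lam, trigExt_differentiable N c lam, fun x => (hform x).symm,
      ⟨∑ k : Fin N, ‖c k‖, fun z hz => trigExt_bound N c lam (fun k => hlam k) hz⟩⟩
  choose P hPd hPx hPb using hch
  -- uniform Cauchy on ℝ
  have hcau : ∀ ε : ℝ, 0 < ε → ∃ N, ∀ m ≥ N, ∀ n ≥ N, ∀ x : ℝ, ‖p m x - p n x‖ ≤ ε := by
    intro ε hε
    have h2 := Metric.tendstoUniformly_iff.1 hconv (ε / 2) (by linarith)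
    obtain ⟨N, hN⟩ := h2.exists_forall_of_atTop
    refine ⟨N, fun m hm n hn x => ?_⟩
    have h3 := hN m hm x
    have h4 := hN n hn x
    rw [dist_eq_norm] at h3 h4
    calc ‖p m x - p n x‖ = ‖(v x - p n x) - (v x - p m x)‖ := by ring_nf
      _ ≤ ‖v x - p n x‖ + ‖v x - p m x‖ := norm_sub_le _ _
      _ ≤ ε := by linarith [h3.le, h4.le]
  -- uniform Cauchy on the closed half-plane
  have hucs : UniformCauchySeqOn P atTop {z : ℂ | 0 ≤ z.im} := by
    rw [Metric.uniformCauchySeqOn_iff]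
    intro ε hε
    obtain ⟨N, hN⟩ := hcau (ε / 2) (by linarith)
    refine ⟨N, fun m hm n hn z hz => ?_⟩
    rw [dist_eq_norm]
    have hb : ‖(fun w => P m w - P n w) z‖ ≤ ε / 2 := by
      refine maxPrincipleUHP (f := fun w => P m w - P n w)
        (K := (hPb m).choose + (hPb n).choose) ?_ ?_ ?_ ?_ hz
      · exact ((hPd m).continuous.sub (hPd n).continuous).continuousOn
      · exact ((hPd m).sub (hPd n)).differentiableOn
      · intro w hw
        exact (norm_sub_le _ _).trans (add_le_add ((hPb m).choose_spec w hw)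
          ((hPb n).choose_spec w hw))
      · intro x
        simp only [hPx]
        exact hN m hm n hn x
    calc ‖P m z - P n z‖ ≤ ε / 2 := hb
      _ < ε := by linarith
  -- define the limit
  have hex : ∀ z ∈ {z : ℂ | 0 ≤ z.im}, ∃ L : ℂ, Tendsto (fun n => P n z) atTop (nhds L) :=
    fun z hz => cauchySeq_tendsto_of_complete (hucs.cauchySeq hz)
  set G : ℂ → ℂ := fun z => limUnder atTop (fun n => P n z) with hGdef
  have hGt : ∀ z ∈ {z : ℂ | 0 ≤ z.im}, Tendsto (fun n => P n z) atTop (nhds (G z)) := by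
    intro z hz
    obtain ⟨L, hL⟩ := hex z hz
    rw [hGdef]
    simpa only [hL.limUnder_eq] using hL
  have htu : TendstoUniformlyOn P G atTop {z : ℂ | 0 ≤ z.im} :=
    hucs.tendstoUniformlyOn_of_tendsto hGt
  refine ⟨G, ?_, ?_, ?_, ?_⟩
  · exact htu.continuousOn (Eventually.of_forall fun n => (hPd n).continuous.continuousOn).frequently
  · refine (htu.tendstoLocallyUniformlyOn.mono ?_).differentiableOn
      (Eventually.of_forall fun n => (hPd n).differentiableOn) isOpen_UHP
    intro z hz
    simp only [mem_setOf_eq] at hz ⊢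
    exact hz.le
  · intro x
    have h1 : Tendsto (fun n => P n (x : ℂ)) atTop (nhds (G (x : ℂ))) :=
      hGt _ (by simp [Complex.ofReal_im])
    have h2 : Tendsto (fun n => P n (x : ℂ)) atTop (nhds (v x)) := by
      have := hconv.tendsto_at x
      simpa only [hPx] using this
    exact tendsto_nhds_unique h1 h2
  · -- boundedness
    have h1 := (Metric.tendstoUniformlyOn_iff.1 htu 1 one_pos).exists_forall_of_atTop
    obtain ⟨N, hN⟩ := h1
    obtain ⟨B, hB⟩ := hPb N
    refine ⟨B + 1, fun z hz => ?_⟩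
    have h2 := hN N le_rfl z hz
    rw [dist_eq_norm] at h2
    have h6 : ‖G z‖ - ‖P N z‖ ≤ ‖G z - P N z‖ := norm_sub_norm_le _ _
    linarith [hB z hz, h2.le]


/-- A bounded holomorphic function on the upper half-plane whose boundary values are purely
imaginary is constant. -/
lemma const_of_re_zero_boundary {h : ℂ → ℂ} {K : ℝ}
    (hc : ContinuousOn h {z : ℂ | 0 ≤ z.im})
    (hd : DifferentiableOn ℂ h {z : ℂ | 0 < z.im})
    (hK : ∀ z : ℂ, 0 ≤ z.im → ‖h z‖ ≤ K)
    (hre : ∀ x : ℝ, (h (x : ℂ)).re = 0) :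
    ∀ z : ℂ, 0 ≤ z.im → h z = h Complex.I := by
  have hUopen : IsOpen {z : ℂ | 0 < z.im} := isOpen_UHP
  have hUsub : {z : ℂ | 0 < z.im} ⊆ {z : ℂ | 0 ≤ z.im} := by
    intro z hz
    simp only [mem_setOf_eq] at hz ⊢
    exact hz.le
  -- step 1 : re (h z) = 0 on the closed half-plane
  have hre0 : ∀ z : ℂ, 0 ≤ z.im → (h z).re = 0 := by
    have key : ∀ s : ℝ, s = 1 ∨ s = -1 → ∀ z : ℂ, 0 ≤ z.im →
        Real.exp (s * (h z).re) ≤ 1 := by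
      intro s hs z hz
      have h1 : ‖Complex.exp ((s : ℂ) * h z)‖ ≤ 1 := by
        refine maxPrincipleUHP (f := fun w => Complex.exp ((s:ℂ) * h w))
          (K := Real.exp (|s| * K)) ?_ ?_ ?_ ?_ hz
        · exact Complex.continuous_exp.comp_continuousOn (continuousOn_const.mul hc)
        · exact (DifferentiableOn.const_mul hd _).cexp
        · intro w hw
          rw [Complex.norm_exp]
          apply Real.exp_le_exp.2
          have : ((s:ℂ) * h w).re = s * (h w).re := by
            simp [Complex.mul_re, Complex.ofReal_re, Complex.ofReal_im]
          rw [this]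
          calc s * (h w).re ≤ |s * (h w).re| := le_abs_self _
            _ = |s| * |(h w).re| := abs_mul _ _
            _ ≤ |s| * K := by
                apply mul_le_mul_of_nonneg_left ?_ (abs_nonneg s)
                exact (Complex.abs_re_le_norm _).trans (hK w hw)
        · intro x
          rw [Complex.norm_exp]
          have : ((s:ℂ) * h (x:ℂ)).re = s * (h (x:ℂ)).re := by
            simp [Complex.mul_re, Complex.ofReal_re, Complex.ofReal_im]
          rw [this, hre x, mul_zero, Real.exp_zero]
      rw [Complex.norm_exp] at h1
      have : ((s:ℂ) * h z).re = s * (h z).re := by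
        simp [Complex.mul_re, Complex.ofReal_re, Complex.ofReal_im]
      rwa [this] at h1
    intro z hz
    have h1 := Real.exp_le_one_iff.1 (key 1 (Or.inl rfl) z hz)
    have h2 := Real.exp_le_one_iff.1 (key (-1) (Or.inr rfl) z hz)
    rw [one_mul] at h1
    rw [neg_one_mul, neg_nonpos] at h2
    linarith
  -- step 2 : exp (h z) has constant modulus 1 on U, hence is constant on U
  have hexp_const : EqOn (fun z => Complex.exp (h z)) (Function.const ℂ (Complex.exp (h I)))
      {z : ℂ | 0 < z.im} := by
    refine Complex.eqOn_of_isPreconnected_of_isMaxOn_norm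
      (convex_halfSpace_im_gt (0:ℝ)).isPreconnected hUopen hd.cexp (by simp : (0:ℝ) < I.im) ?_
    intro w hw
    simp only [Function.comp_apply, mem_setOf_eq]
    have h1 : ‖Complex.exp (h w)‖ = 1 := by
      rw [Complex.norm_exp, hre0 w (le_of_lt hw), Real.exp_zero]
    have h2 : ‖Complex.exp (h I)‖ = 1 := by
      rw [Complex.norm_exp, hre0 I (by simp), Real.exp_zero]
    simp only [h1, h2]
    exact le_rfl
  -- step 3 : deriv h = 0 on U
  have hderiv : ∀ z ∈ {z : ℂ | 0 < z.im}, HasDerivAt h 0 z := by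
    intro z hz
    have hda : DifferentiableAt ℂ h z := hd.differentiableAt (hUopen.mem_nhds hz)
    have h1 : HasDerivAt (fun w => Complex.exp (h w)) (Complex.exp (h z) * deriv h z) z :=
      hda.hasDerivAt.cexp
    have h2 : HasDerivAt (fun w => Complex.exp (h w)) 0 z := by
      refine HasDerivAt.congr_of_eventuallyEq (hasDerivAt_const z (Complex.exp (h I))) ?_
      filter_upwards [hUopen.mem_nhds hz] with w hw
      exact hexp_const hw
    have h3 : Complex.exp (h z) * deriv h z = 0 := h1.unique h2
    have h4 : deriv h z = 0 := by
      rcases mul_eq_zero.1 h3 with h | h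
      · exact absurd h (Complex.exp_ne_zero _)
      · exact h
    rw [← h4]
    exact hda.hasDerivAt
  -- step 4 : h is constant on U
  have hconstU : ∀ z ∈ {z : ℂ | 0 < z.im}, h z = h I := by
    intro z hz
    have hzero : (ContinuousLinearMap.smulRight (1 : ℂ →L[ℂ] ℂ) (0:ℂ)) = 0 := by
      ext w; simp
    have key := Convex.norm_image_sub_le_of_norm_hasFDerivWithin_le
      (f := h) (f' := fun _ => (0 : ℂ →L[ℂ] ℂ)) (C := 0) (s := {z : ℂ | 0 < z.im})
      (fun w hw => by
        have h5 : HasFDerivWithinAt h (ContinuousLinearMap.smulRight (1 : ℂ →L[ℂ] ℂ) (0:ℂ))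
            {z : ℂ | 0 < z.im} w := (hderiv w hw).hasFDerivAt.hasFDerivWithinAt
        rwa [hzero] at h5)
      (fun w _ => by simp)
      (convex_halfSpace_im_gt (0:ℝ)) (by simp : (0:ℝ) < I.im) hz
    rw [zero_mul] at key
    have : ‖h z - h I‖ = 0 := le_antisymm key (norm_nonneg _)
    rwa [norm_eq_zero, sub_eq_zero] at this
  -- step 5 : extend to the boundary by continuity
  intro z hz
  rcases lt_or_eq_of_le hz with hlt | heq
  · exact hconstU z hlt
  · -- z is on the real axis
    have hpath : Tendsto (fun t : ℝ => z + t * Complex.I) (nhdsWithin 0 (Ioi 0)) (nhds z) := by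
      have : Tendsto (fun t : ℝ => z + t * Complex.I) (nhds 0) (nhds (z + 0 * Complex.I)) := by
        apply Tendsto.add tendsto_const_nhds
        exact (Complex.continuous_ofReal.mul continuous_const).tendsto 0
      simpa using this.mono_left nhdsWithin_le_nhds
    have hmem : ∀ t : ℝ, t ∈ Ioi (0:ℝ) → z + t * Complex.I ∈ {z : ℂ | 0 ≤ z.im} := by
      intro t ht
      simp only [mem_setOf_eq, Complex.add_im, Complex.mul_im, Complex.ofReal_re,
        Complex.ofReal_im, Complex.I_im, Complex.I_re]
      simp only [mem_Ioi] at ht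
      nlinarith [le_of_eq heq.symm]
    have hcz : Tendsto h (nhdsWithin z {z : ℂ | 0 ≤ z.im}) (nhds (h z)) := hc z hz
    have hcomp : Tendsto (fun t : ℝ => h (z + t * Complex.I)) (nhdsWithin 0 (Ioi 0))
        (nhds (h z)) := by
      refine hcz.comp ?_
      rw [tendsto_nhdsWithin_iff]
      exact ⟨hpath, eventually_nhdsWithin_of_forall hmem⟩
    have hval : ∀ t : ℝ, t ∈ Ioi (0:ℝ) → h (z + t * Complex.I) = h I := by
      intro t ht
      apply hconstU
      simp only [mem_setOf_eq, Complex.add_im, Complex.mul_im, Complex.ofReal_re,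
        Complex.ofReal_im, Complex.I_im, Complex.I_re]
      simp only [mem_Ioi] at ht
      nlinarith [le_of_eq heq.symm]
    have hconst : Tendsto (fun t : ℝ => h (z + t * Complex.I)) (nhdsWithin 0 (Ioi 0))
        (nhds (h I)) := by
      refine Tendsto.congr' ?_ tendsto_const_nhds
      exact (eventually_nhdsWithin_of_forall hval).mono fun t ht => ht.symm
    exact tendsto_nhds_unique hcomp hconst


lemma tendstoUniformly_const' {α β : Type*} [UniformSpace β] (f : α → β) :
    TendstoUniformly (fun _ : ℕ => f) f atTop := fun u hu =>
  Eventually.of_forall fun _ => fun x => refl_mem_uniformity hu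

/-- trig polys are bounded on ℝ. -/
lemma isTrigPoly_bdd {S : Set ℝ} {p : ℝ → ℂ} (hp : IsTrigPoly S p) : IsBdd p := by
  obtain ⟨N, c, lam, _, hform⟩ := hp
  exact ⟨∑ n : Fin N, ‖c n‖, fun x => by rw [hform x]; exact trigExt_bound_real N c lam x⟩

lemma isBdd_of_mem_APin {S : Set ℝ} {f : ℝ → ℂ} (hf : f ∈ APin S) : IsBdd f := by
  obtain ⟨p, hp, hconv⟩ := hf
  obtain ⟨N, hN⟩ := (Metric.tendstoUniformly_iff.1 hconv 1 one_pos).exists_forall_of_atTop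
  obtain ⟨B, hB⟩ := isTrigPoly_bdd (hp N)
  refine ⟨B + 1, fun x => ?_⟩
  have := hN N le_rfl x
  rw [dist_eq_norm] at this
  have h6 : ‖f x‖ - ‖p N x‖ ≤ ‖f x - p N x‖ := norm_sub_norm_le _ _
  linarith [hB x, this.le]

lemma exp_mem_APin {S : Set ℝ} {ν : ℝ} (hν : ν ∈ S) :
    (fun x : ℝ => Complex.exp (Complex.I * ν * x)) ∈ APin S := by
  refine ⟨fun _ => fun x : ℝ => Complex.exp (Complex.I * ν * x), fun n => ?_,
    tendstoUniformly_const' _⟩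
  exact ⟨1, fun _ => 1, fun _ => ν, fun _ => hν, fun x => by simp⟩

lemma isTrigPoly_mul {S : Set ℝ} (hS : ∀ a ∈ S, ∀ b ∈ S, a + b ∈ S) {p q : ℝ → ℂ}
    (hp : IsTrigPoly S p) (hq : IsTrigPoly S q) : IsTrigPoly S (fun x => p x * q x) := by
  obtain ⟨N, c, a, ha, hpf⟩ := hp
  obtain ⟨M, d, b, hb, hqf⟩ := hq
  refine ⟨N * M, fun i => c (finProdFinEquiv.symm i).1 * d (finProdFinEquiv.symm i).2,
    fun i => a (finProdFinEquiv.symm i).1 + b (finProdFinEquiv.symm i).2,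
    fun i => hS _ (ha _) _ (hb _), fun x => ?_⟩
  show p x * q x = _
  rw [hpf x, hqf x, Finset.sum_mul_sum]
  rw [← Equiv.sum_comp (finProdFinEquiv : Fin N × Fin M ≃ Fin (N * M))
    (fun i => (c (finProdFinEquiv.symm i).1 * d (finProdFinEquiv.symm i).2) *
      Complex.exp (Complex.I * ((a (finProdFinEquiv.symm i).1 + b (finProdFinEquiv.symm i).2 : ℝ)) * x))]
  rw [Fintype.sum_prod_type]
  refine Finset.sum_congr rfl fun n _ => Finset.sum_congr rfl fun m _ => ?_
  simp only [Equiv.symm_apply_apply]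
  have hcast : ((a n + b m : ℝ) : ℂ) = (a n : ℂ) + (b m : ℂ) := by push_cast; ring
  have harg : Complex.I * ((a n : ℂ) + (b m : ℂ)) * (x:ℂ)
      = Complex.I * (a n) * x + Complex.I * (b m) * x := by ring
  rw [hcast, harg, Complex.exp_add]
  ring

lemma APin_mul {S : Set ℝ} (hS : ∀ a ∈ S, ∀ b ∈ S, a + b ∈ S) {f g : ℝ → ℂ}
    (hf : f ∈ APin S) (hg : g ∈ APin S) : (fun x => f x * g x) ∈ APin S := by
  obtain ⟨p, hp, hpc⟩ := hf
  obtain ⟨q, hq, hqc⟩ := hg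
  obtain ⟨Cf, hCf⟩ := isBdd_of_mem_APin (⟨p, hp, hpc⟩ : f ∈ APin S)
  obtain ⟨Cg, hCg⟩ := isBdd_of_mem_APin (⟨q, hq, hqc⟩ : g ∈ APin S)
  have hCf0 : 0 ≤ Cf := (norm_nonneg _).trans (hCf 0)
  have hCg0 : 0 ≤ Cg := (norm_nonneg _).trans (hCg 0)
  refine ⟨fun n => fun x => p n x * q n x, fun n => isTrigPoly_mul hS (hp n) (hq n), ?_⟩
  rw [Metric.tendstoUniformly_iff]
  intro ε hε
  -- choose η small
  set η : ℝ := min 1 (ε / (2 * (Cf + Cg + 2))) with hη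
  have hη0 : 0 < η := by
    apply lt_min one_pos
    positivity
  filter_upwards [Metric.tendstoUniformly_iff.1 hpc η hη0,
    Metric.tendstoUniformly_iff.1 hqc η hη0] with n hn1 hn2 x
  have e1 : ‖f x - p n x‖ < η := by rw [← dist_eq_norm]; exact hn1 x
  have e2 : ‖g x - q n x‖ < η := by rw [← dist_eq_norm]; exact hn2 x
  have hqb : ‖q n x‖ ≤ Cg + 1 := by
    have h6 : ‖q n x‖ - ‖g x‖ ≤ ‖q n x - g x‖ := norm_sub_norm_le _ _
    rw [norm_sub_rev] at h6
    have h7 : η ≤ 1 := min_le_left _ _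
    linarith [hCg x, e2.le]
  rw [dist_eq_norm]
  have key : f x * g x - p n x * q n x = (f x - p n x) * q n x + f x * (g x - q n x) := by ring
  rw [key]
  have hb1 : ‖(f x - p n x) * q n x‖ ≤ η * (Cg + 1) := by
    rw [norm_mul]
    exact mul_le_mul e1.le hqb (norm_nonneg _) hη0.le
  have hb2 : ‖f x * (g x - q n x)‖ ≤ Cf * η := by
    rw [norm_mul]
    exact mul_le_mul (hCf x) e2.le (norm_nonneg _) hCf0
  calc ‖(f x - p n x) * q n x + f x * (g x - q n x)‖
      ≤ ‖(f x - p n x) * q n x‖ + ‖f x * (g x - q n x)‖ := norm_add_le _ _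
    _ ≤ η * (Cg + 1) + Cf * η := add_le_add hb1 hb2
    _ = η * (Cf + Cg + 1) := by ring
    _ ≤ (ε / (2 * (Cf + Cg + 2))) * (Cf + Cg + 1) := by
        apply mul_le_mul_of_nonneg_right (min_le_right _ _)
        linarith
    _ < ε := by
        rw [div_mul_eq_mul_div, div_lt_iff₀ (by positivity)]
        nlinarith

lemma APin_conj {w : ℝ → ℂ} (hw : w ∈ APin (Set.Iic 0)) :
    (fun x => (starRingEnd ℂ) (w x)) ∈ APin (Set.Ici 0) := by
  obtain ⟨p, hp, hconv⟩ := hw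
  refine ⟨fun n => fun x => (starRingEnd ℂ) (p n x), fun n => ?_, ?_⟩
  · obtain ⟨N, c, lam, hlam, hform⟩ := hp n
    refine ⟨N, fun k => (starRingEnd ℂ) (c k), fun k => -lam k,
      fun k => by simpa using hlam k, fun x => ?_⟩
    show (starRingEnd ℂ) (p n x) = _
    rw [hform x, map_sum]
    refine Finset.sum_congr rfl fun k _ => ?_
    rw [map_mul, ← Complex.exp_conj]
    congr 1
    simp only [map_mul, Complex.conj_I, Complex.conj_ofReal]
    push_cast
    ring
  · rw [Metric.tendstoUniformly_iff] at hconv ⊢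
    intro ε hε
    filter_upwards [hconv ε hε] with n hn x
    rw [Complex.dist_conj_conj]
    exact hn x

lemma APin_reflect {u : ℝ → ℂ} (hu : u ∈ APin (Set.Iic 0)) :
    (fun x => u (-x)) ∈ APin (Set.Ici 0) := by
  obtain ⟨p, hp, hconv⟩ := hu
  refine ⟨fun n => fun x => p n (-x), fun n => ?_, ?_⟩
  · obtain ⟨N, c, lam, hlam, hform⟩ := hp n
    refine ⟨N, c, fun k => -lam k, fun k => by simpa using hlam k, fun x => ?_⟩
    show p n (-x) = _
    rw [hform (-x)]
    refine Finset.sum_congr rfl fun k _ => ?_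
    congr 1
    push_cast
    ring
  · exact hconv.comp (fun x : ℝ => -x)


lemma Iic_add_closed : ∀ a ∈ Set.Iic (0:ℝ), ∀ b ∈ Set.Iic (0:ℝ), a + b ∈ Set.Iic (0:ℝ) := by
  intro a ha b hb
  simp only [mem_Iic] at *
  linarith

/-- Key rigidity: a function in `AP⁻` that agrees with a function in `AP⁺` is constant. -/
lemma apin_eq_const {w v : ℝ → ℂ} (hw : w ∈ APin (Set.Iic 0)) (hv : v ∈ APin (Set.Ici 0))
    (hwv : ∀ x : ℝ, w x = v x) : ∀ x y : ℝ, v x = v y := by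
  have hwb : (fun x => (starRingEnd ℂ) (w x)) ∈ APin (Set.Ici 0) := APin_conj hw
  obtain ⟨G, hGc, hGd, hGx, CG, hCG⟩ := exists_uhp_extension hv
  obtain ⟨X, hXc, hXd, hXx, CX, hCX⟩ := exists_uhp_extension hwb
  set h : ℂ → ℂ := fun z => X z - G z with hh
  set k : ℂ → ℂ := fun z => Complex.I * (X z + G z) with hk
  have hhre : ∀ x : ℝ, (h (x:ℂ)).re = 0 := by
    intro x
    simp only [hh, hXx, hGx, ← hwv x, Complex.sub_re, Complex.conj_re]
    ring
  have hkre : ∀ x : ℝ, (k (x:ℂ)).re = 0 := by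
    intro x
    simp only [hk, hXx, hGx, ← hwv x]
    simp [Complex.mul_re, Complex.add_im, Complex.conj_im]
  have hhconst := const_of_re_zero_boundary (h := h) (K := CX + CG)
    ((hXc.sub hGc)) ((hXd.sub hGd))
    (fun z hz => (norm_sub_le _ _).trans (add_le_add (hCX z hz) (hCG z hz)))
    hhre
  have hkK : ∀ z : ℂ, 0 ≤ z.im → ‖k z‖ ≤ CX + CG := by
    intro z hz
    rw [hk]
    simp only [norm_mul, Complex.norm_I, one_mul]
    exact (norm_add_le _ _).trans (add_le_add (hCX z hz) (hCG z hz))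
  have hkconst := const_of_re_zero_boundary (h := k) (K := CX + CG)
    (continuousOn_const.mul (hXc.add hGc)) ((hXd.add hGd).const_mul _)
    hkK hkre
  intro x y
  have hx0 : (0:ℝ) ≤ ((x:ℂ)).im := by simp
  have hy0 : (0:ℝ) ≤ ((y:ℂ)).im := by simp
  have e1 : X (x:ℂ) - G (x:ℂ) = X (y:ℂ) - G (y:ℂ) := by
    have := (hhconst (x:ℂ) hx0).trans (hhconst (y:ℂ) hy0).symm
    simpa [hh] using this
  have e2 : X (x:ℂ) + G (x:ℂ) = X (y:ℂ) + G (y:ℂ) := by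
    have h3 := (hkconst (x:ℂ) hx0).trans (hkconst (y:ℂ) hy0).symm
    simp only [hk] at h3
    exact mul_left_cancel₀ Complex.I_ne_zero h3
  have : G (x:ℂ) = G (y:ℂ) := by linear_combination (e2 - e1) / 2
  rw [← hGx x, ← hGx y]
  exact this

/-- Rigidity for invertible elements of `AP⁻` satisfying the reflection relation. -/
lemma lemB {u ui : ℝ → ℂ} (hu : u ∈ APin (Set.Iic 0)) (hui : ui ∈ APin (Set.Iic 0))
    (huui : ∀ x : ℝ, u x * ui x = 1) {ν : ℝ}
    (hrel : ∀ x : ℝ, u x * Complex.exp (Complex.I * ν * x) = u (-x)) :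
    (∀ x y : ℝ, u x = u y) ∧ ν = 0 := by
  have hne : ∀ x : ℝ, u x ≠ 0 := fun x => left_ne_zero_of_mul_eq_one (huui x)
  have hne' : ∀ x : ℝ, ui x ≠ 0 := fun x => right_ne_zero_of_mul_eq_one (huui x)
  have hconst : ∀ x y : ℝ, u x = u y := by
    rcases le_or_gt ν 0 with hν | hν
    · have hwmem : (fun x : ℝ => u x * Complex.exp (Complex.I * ν * x)) ∈ APin (Set.Iic 0) :=
        APin_mul Iic_add_closed hu (exp_mem_APin (mem_Iic.2 hν))
      have hvmem : (fun x : ℝ => u (-x)) ∈ APin (Set.Ici 0) := APin_reflect hu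
      have hcc := apin_eq_const hwmem hvmem hrel
      intro x y
      have := hcc (-x) (-y)
      simpa using this
    · -- apply the argument to the inverse
      have hrel' : ∀ x : ℝ, ui x * Complex.exp (Complex.I * (-ν : ℝ) * x) = ui (-x) := by
        intro x
        have h1 := hrel x
        have h2 := huui x
        have h3 := huui (-x)
        have he : Complex.exp (Complex.I * ((-ν : ℝ):ℂ) * x)
            = (Complex.exp (Complex.I * ν * x))⁻¹ := by
          rw [← Complex.exp_neg]
          congr 1
          push_cast
          ring
        have h4 : (u x * Complex.exp (Complex.I * ν * x)) * ui (-x) = 1 := by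
          rw [h1]; exact h3
        have hexne : Complex.exp (Complex.I * (ν:ℂ) * x) ≠ 0 := Complex.exp_ne_zero _
        have h8 : ui x = Complex.exp (Complex.I * ν * x) * ui (-x) := by
          calc ui x = ui x * (u x * Complex.exp (Complex.I * ν * x) * ui (-x)) := by
                rw [h4, mul_one]
            _ = (u x * ui x) * (Complex.exp (Complex.I * ν * x) * ui (-x)) := by ring
            _ = Complex.exp (Complex.I * ν * x) * ui (-x) := by rw [h2, one_mul]
        rw [he, h8]
        field_simp
      have hwmem : (fun x : ℝ => ui x * Complex.exp (Complex.I * (-ν : ℝ) * x))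
          ∈ APin (Set.Iic 0) :=
        APin_mul Iic_add_closed hui (exp_mem_APin (mem_Iic.2 (by linarith : -ν ≤ 0)))
      have hvmem : (fun x : ℝ => ui (-x)) ∈ APin (Set.Ici 0) := APin_reflect hui
      have hcc := apin_eq_const hwmem hvmem hrel'
      intro x y
      have h5 : ui x = ui y := by
        have := hcc (-x) (-y)
        simpa using this
      have h6 := huui x
      have h7 := huui y
      rw [← h5] at h7
      exact mul_right_cancel₀ (hne' x) (h6.trans h7.symm)
  refine ⟨hconst, ?_⟩
  by_contra hν0
  have hexp1 : Complex.exp (Complex.I * ν * ((Real.pi / ν : ℝ):ℂ)) = 1 := by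
    have h1 := hrel (Real.pi / ν)
    rw [hconst (-(Real.pi / ν)) (Real.pi / ν)] at h1
    have := mul_left_cancel₀ (hne (Real.pi / ν)) (h1.trans (mul_one _).symm)
    exact this
  have harg : Complex.I * (ν:ℂ) * ((Real.pi / ν : ℝ):ℂ) = (Real.pi : ℂ) * Complex.I := by
    have hνc : (ν:ℂ) ≠ 0 := Complex.ofReal_ne_zero.2 hν0
    push_cast
    field_simp
  rw [harg, Complex.exp_pi_mul_I] at hexp1
  norm_num at hexp1


end APFactorizationAux

/-- Uniqueness (up to a nonzero constant) of the AP asymmetric factorization. -/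
theorem apAsymFactorization_unique (φ : ℝ → ℂ) (hφ : φ ∈ GAP)
    (φm₁ φe₁ φm₂ φe₂ : ℝ → ℂ) (l₁ l₂ : ℝ)
    (h₁ : IsAPAsymFactorization φ φm₁ l₁ φe₁)
    (h₂ : IsAPAsymFactorization φ φm₂ l₂ φe₂) :
    l₁ = l₂ ∧ ∃ γ : ℂ, γ ≠ 0 ∧ (∀ x, φm₁ x = γ * φm₂ x) ∧ ∀ x, φe₁ x = γ⁻¹ * φe₂ x := by
  obtain ⟨⟨hm1ap, ψ₁, hψ1ap, hmul1⟩, ⟨_, ψe1, _, hprod1⟩, heven1, heq1⟩ := h₁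
  obtain ⟨⟨hm2ap, ψ₂, hψ2ap, hmul2⟩, ⟨_, ψe2, _, hprod2⟩, heven2, heq2⟩ := h₂
  -- pointwise nonvanishing
  have hm2ne : ∀ x : ℝ, φm₂ x ≠ 0 := fun x => left_ne_zero_of_mul_eq_one (hmul2 x)
  have hψ2ne : ∀ x : ℝ, ψ₂ x ≠ 0 := fun x => right_ne_zero_of_mul_eq_one (hmul2 x)
  have he1ne : ∀ x : ℝ, φe₁ x ≠ 0 := fun x => left_ne_zero_of_mul_eq_one (hprod1 x)
  -- the quotient u = φm₁/φm₂ and its inverse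
  set u : ℝ → ℂ := fun x => φm₁ x * ψ₂ x with hu_def
  set ui : ℝ → ℂ := fun x => φm₂ x * ψ₁ x with hui_def
  have hu : u ∈ APin (Set.Iic 0) := APin_mul Iic_add_closed hm1ap hψ2ap
  have hui : ui ∈ APin (Set.Iic 0) := APin_mul Iic_add_closed hm2ap hψ1ap
  have huui : ∀ x : ℝ, u x * ui x = 1 := by
    intro x
    have e1 := hmul1 x
    have e2 := hmul2 x
    calc u x * ui x = (φm₁ x * ψ₁ x) * (φm₂ x * ψ₂ x) := by rw [hu_def, hui_def]; ring
      _ = 1 := by rw [e1, e2, one_mul]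
  -- relation (R) : u x * exp(I μ x) * φe₁ x = φe₂ x  with μ = l₁ - l₂
  set μ : ℝ := l₁ - l₂ with hμ_def
  have hR : ∀ x : ℝ, u x * Complex.exp (Complex.I * (μ:ℝ) * x) * φe₁ x = φe₂ x := by
    intro x
    have hE : φm₁ x * Complex.exp (Complex.I * l₁ * x) * φe₁ x
        = φm₂ x * Complex.exp (Complex.I * l₂ * x) * φe₂ x := (heq1 x).symm.trans (heq2 x)
    have hsplit : Complex.exp (Complex.I * ((μ:ℝ):ℂ) * x)
        = Complex.exp (Complex.I * l₁ * x) * (Complex.exp (Complex.I * l₂ * x))⁻¹ := by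
      rw [← Complex.exp_neg, ← Complex.exp_add]
      congr 1
      rw [hμ_def]
      push_cast
      ring
    have hψ2x : ψ₂ x = (φm₂ x)⁻¹ := by
      field_simp [hm2ne x]
      linear_combination hmul2 x
    rw [hu_def]
    simp only []
    rw [hψ2x, hsplit]
    have hexne2 : Complex.exp (Complex.I * (l₂:ℂ) * x) ≠ 0 := Complex.exp_ne_zero _
    field_simp [hm2ne x, hexne2]
    linear_combination (norm := ring_nf) hE
  -- relation (S) : u x * exp(2 I μ x) = u (-x)
  have hS : ∀ x : ℝ, u x * Complex.exp (Complex.I * ((2*μ : ℝ):ℂ) * x) = u (-x) := by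
    intro x
    have r1 := hR x
    have r2 := hR (-x)
    rw [heven1 x, heven2 x] at r2
    -- r1, r2 have the same RHS
    have r3 : u x * Complex.exp (Complex.I * (μ:ℝ) * x) * φe₁ x
        = u (-x) * Complex.exp (Complex.I * (μ:ℝ) * ((-x : ℝ):ℂ)) * φe₁ x := r1.trans r2.symm
    have r4 : u x * Complex.exp (Complex.I * (μ:ℝ) * x)
        = u (-x) * Complex.exp (Complex.I * (μ:ℝ) * ((-x : ℝ):ℂ)) :=
      mul_right_cancel₀ (he1ne x) r3
    have hsq : Complex.exp (Complex.I * ((2*μ : ℝ):ℂ) * x)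
        = Complex.exp (Complex.I * (μ:ℝ) * x) * Complex.exp (Complex.I * (μ:ℝ) * x) := by
      rw [← Complex.exp_add]
      congr 1
      push_cast
      ring
    have hcancel : Complex.exp (Complex.I * (μ:ℝ) * ((-x : ℝ):ℂ))
        * Complex.exp (Complex.I * (μ:ℝ) * x) = 1 := by
      rw [← Complex.exp_add]
      rw [show Complex.I * ((μ:ℝ):ℂ) * ((-x : ℝ):ℂ) + Complex.I * ((μ:ℝ):ℂ) * (x:ℂ) = 0 by
        push_cast; ring]
      exact Complex.exp_zero
    calc u x * Complex.exp (Complex.I * ((2*μ : ℝ):ℂ) * x)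
        = (u x * Complex.exp (Complex.I * (μ:ℝ) * x)) * Complex.exp (Complex.I * (μ:ℝ) * x) := by
          rw [hsq]; ring
      _ = (u (-x) * Complex.exp (Complex.I * (μ:ℝ) * ((-x : ℝ):ℂ)))
            * Complex.exp (Complex.I * (μ:ℝ) * x) := by rw [r4]
      _ = u (-x) * (Complex.exp (Complex.I * (μ:ℝ) * ((-x : ℝ):ℂ))
            * Complex.exp (Complex.I * (μ:ℝ) * x)) := by ring
      _ = u (-x) := by rw [hcancel, mul_one]
  obtain ⟨huconst, h2μ⟩ := lemB hu hui huui hS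
  have hμ0 : μ = 0 := by linarith
  have hl : l₁ = l₂ := by rw [hμ_def] at hμ0; linarith
  refine ⟨hl, u 0, left_ne_zero_of_mul_eq_one (huui 0), ?_, ?_⟩
  · intro x
    have h5 : u x = u 0 := huconst x 0
    calc φm₁ x = φm₁ x * (φm₂ x * ψ₂ x) := by rw [hmul2 x, mul_one]
      _ = (φm₁ x * ψ₂ x) * φm₂ x := by ring
      _ = u x * φm₂ x := rfl
      _ = u 0 * φm₂ x := by rw [h5]
  · intro x
    have h5 : u x = u 0 := huconst x 0
    have r1 := hR x
    rw [hμ0] at r1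
    simp only [Complex.ofReal_zero, mul_zero, zero_mul, Complex.exp_zero, mul_one] at r1
    -- r1 : u x * φe₁ x = φe₂ x
    rw [h5] at r1
    rw [← r1]
    rw [inv_mul_cancel_left₀ (left_ne_zero_of_mul_eq_one (huui 0))]
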